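/- Let J ⊂ ℝ^n be a compact convex set containing the origin. Then llenv(cone J) = (lenv(cone J))_ℤ if and only if (lenv(cone J))_ℤ = (cone J)_ℤ \ (cone J + e_{n+1})_ℤ. -/

import Mathlib

open Set Pointwise
open scoped Classical

noncomputable section

namespace ArxivFreeSum

/-- A point of `ℝ^m` is an integer lattice point iff all coordinates are integers. -/
def IsLat {m : ℕ} (x : Fin m → ℝ) : Prop := ∀ i, ∃ z : ℤ, x i = (z : ℝ)

/-- The set of integer lattice points of a set `S`. -/
def latt {m : ℕ} (S : Set (Fin m → ℝ)) : Set (Fin m → ℝ) := {x | x ∈ S ∧ IsLat x}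

variable {n : ℕ}

/-- The affine embedding `α : ℝ^n → ℝ^{n+1}`, `a ↦ (a, 1)`. -/
def emb (a : Fin n → ℝ) : Fin (n + 1) → ℝ := Fin.snoc a 1

/-- The cone over `K`: all nonnegative multiples of `α(K)`. -/
def cone (K : Set (Fin n → ℝ)) : Set (Fin (n + 1) → ℝ) :=
  {x | ∃ l : ℝ, ∃ a ∈ K, 0 ≤ l ∧ x = l • emb a}

/-- The last standard basis vector `e_{n+1}` of `ℝ^{n+1}`. -/
def eLast (n : ℕ) : Fin (n + 1) → ℝ := Pi.single (Fin.last n) 1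

/-- The vertical projection `ε_J` onto the lower envelope of `cone J`. -/
def eps (J : Set (Fin n → ℝ)) (x : Fin (n + 1) → ℝ) : Fin (n + 1) → ℝ :=
  x - sSup {l : ℝ | x - l • eLast n ∈ cone J} • eLast n

/-- The lower envelope of `cone J`. -/
def lenv (J : Set (Fin n → ℝ)) : Set (Fin (n + 1) → ℝ) := eps J '' cone J

/-- The lower lattice envelope of `cone J`. -/
def llenv (J : Set (Fin n → ℝ)) : Set (Fin (n + 1) → ℝ) := eps J '' latt (cone J)

/-- `J ⊕ K` is a free sum. -/
def IsFreeSum (J K : Set (Fin n → ℝ)) : Prop :=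
  (0 : Fin n → ℝ) ∈ J ∧ (0 : Fin n → ℝ) ∈ K ∧
    ∀ m : Fin n → ℝ, m ∈ Submodule.span ℝ (J ∪ K) → IsLat m →
      ∃! q : (Fin n → ℝ) × (Fin n → ℝ),
        (q.1 ∈ Submodule.span ℝ J ∧ IsLat q.1) ∧
        (q.2 ∈ Submodule.span ℝ K ∧ IsLat q.2) ∧ m = q.1 + q.2

/-- `N_{J,K}(m)`: the number of pairs of lattice points of `cone J` and `cone K` summing
to `m`. -/
def Npairs (J K : Set (Fin n → ℝ)) (m : Fin (n + 1) → ℤ) : ℕ :=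
  Set.ncard {q : (Fin (n + 1) → ℝ) × (Fin (n + 1) → ℝ) |
    q.1 ∈ latt (cone J) ∧ q.2 ∈ latt (cone K) ∧ q.1 + q.2 = fun i => (m i : ℝ)}

/-- The coefficientwise form of the multivariate Braun equation
`σ_{cone(J⊕K)} = (1 - z_{n+1}) σ_{cone J} σ_{cone K}`. -/
def BraunEq (J K : Set (Fin n → ℝ)) : Prop :=
  ∀ m : Fin (n + 1) → ℤ,
    (Npairs J K m : ℤ) - (Npairs J K (m - Pi.single (Fin.last n) 1) : ℤ) =
      if (fun i => (m i : ℝ)) ∈ cone (convexHull ℝ (J ∪ K)) then 1 else 0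

/-- A rational polytope: convex hull of finitely many rational points. -/
def IsRatPolytope (P : Set (Fin n → ℝ)) : Prop :=
  ∃ V : Finset (Fin n → ℝ), (∀ v ∈ V, ∀ i, ∃ q : ℚ, v i = (q : ℝ)) ∧
    P = convexHull ℝ (V : Set (Fin n → ℝ))

/-- A lattice polytope: convex hull of finitely many lattice points. -/
def IsLatPolytope (P : Set (Fin n → ℝ)) : Prop :=
  ∃ V : Finset (Fin n → ℝ), (∀ v ∈ V, IsLat v) ∧ P = convexHull ℝ (V : Set (Fin n → ℝ))

/-- The polar dual `P^∨ ⊆ (lin P)^*` of a polytope `P` containing the origin. -/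
def dualSet (P : Set (Fin n → ℝ)) : Set (Module.Dual ℝ (Submodule.span ℝ P)) :=
  {φ | ∀ a : Submodule.span ℝ P, (a : Fin n → ℝ) ∈ P → φ a ≤ 1}

/-- Membership in the dual integer lattice `(lin P)^*_ℤ`. -/
def IsDualLatticePt (P : Set (Fin n → ℝ)) (φ : Module.Dual ℝ (Submodule.span ℝ P)) : Prop :=
  ∀ a : Submodule.span ℝ P, IsLat (a : Fin n → ℝ) → ∃ z : ℤ, φ a = (z : ℝ)

/-- `P^∨` is a lattice polyhedron: every vertex (= extreme point) of `P^∨` lies in the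
dual integer lattice. -/
def DualIsLatticePolyhedron (P : Set (Fin n → ℝ)) : Prop :=
  ∀ φ ∈ Set.extremePoints ℝ (dualSet P), IsDualLatticePt P φ

/-- `den(P^∨)`: the smallest positive integer `d` such that `d • P^∨` is a lattice
polyhedron. -/
def dualDen (P : Set (Fin n → ℝ)) : ℕ :=
  sInf {d : ℕ | 0 < d ∧ ∀ φ ∈ Set.extremePoints ℝ (dualSet P), IsDualLatticePt P ((d : ℝ) • φ)}

/-- `L_P(k)`, with `L_P(0) = 1`. -/
def ehr (P : Set (Fin n → ℝ)) (k : ℕ) : ℕ :=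
  if k = 0 then 1 else Set.ncard (latt ((k : ℝ) • P))

/-- The coefficientwise form of `Ehr_{P⊕Q}(t) = (1-t) Ehr_P(t) Ehr_Q(t)`. -/
def EhrEq (P Q : Set (Fin n → ℝ)) : Prop :=
  ∀ k : ℕ,
    (ehr (convexHull ℝ (P ∪ Q)) k : ℤ) =
      (∑ i ∈ Finset.range (k + 1), (ehr P i : ℤ) * (ehr Q (k - i) : ℤ)) -
        ∑ i ∈ Finset.range k, (ehr P i : ℤ) * (ehr Q (k - 1 - i) : ℤ)

/-- `P` is reflexive: a lattice polytope containing the origin in its relative interior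
whose polar dual is a lattice polytope. -/
def IsReflexive (P : Set (Fin n → ℝ)) : Prop :=
  IsLatPolytope P ∧ (0 : Fin n → ℝ) ∈ intrinsicInterior ℝ P ∧ DualIsLatticePolyhedron P

/-- `P` is Gorenstein of index `k`. -/
def IsGorenstein (P : Set (Fin n → ℝ)) (k : ℕ) : Prop :=
  IsLatPolytope P ∧ 0 < k ∧
    ∃ m : Fin n → ℝ, IsLat m ∧ IsReflexive ((fun x => x - m) '' ((k : ℝ) • P))

/-- `p` is a rational point. -/
def IsRatPt (p : Fin n → ℝ) : Prop := ∀ i, ∃ q : ℚ, p i = (q : ℝ)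

/-- Membership in the lattice `Λ^p` generated by `e_1, …, e_n` and `p`. -/
def InLambda (p x : Fin n → ℝ) : Prop :=
  ∃ (z : Fin n → ℤ) (c : ℤ), x = (fun i => (z i : ℝ)) + (c : ℝ) • p

/-- `den(p)`: the lcm of the denominators of the coordinates of `p`, i.e. the least
positive integer `r` with `r • p` a lattice point. -/
def denPt (p : Fin n → ℝ) : ℕ := sInf {r : ℕ | 0 < r ∧ IsLat ((r : ℝ) • p)}

/-- The projection `ε^p_J` parallel to `α(p)` onto the `p`-lower envelope of `cone J`. -/
def epsP (p : Fin n → ℝ) (J : Set (Fin n → ℝ)) (x : Fin (n + 1) → ℝ) : Fin (n + 1) → ℝ :=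
  x - sSup {l : ℝ | x - l • emb p ∈ cone J} • emb p

/-- The `p`-lower envelope of `cone J`. -/
def plenv (p : Fin n → ℝ) (J : Set (Fin n → ℝ)) : Set (Fin (n + 1) → ℝ) := epsP p J '' cone J

/-- The `p`-lower lattice envelope of `cone J`. -/
def pllenv (p : Fin n → ℝ) (J : Set (Fin n → ℝ)) : Set (Fin (n + 1) → ℝ) :=
  epsP p J '' latt (cone J)

/-- `J ⊕ K` is an affine free sum with common (rational) point `p`. -/
def IsAffineFreeSum (J K : Set (Fin n → ℝ)) (p : Fin n → ℝ) : Prop :=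
  IsRatPt p ∧ p ∈ J ∧ p ∈ K ∧
    ((affineSpan ℝ J : Set (Fin n → ℝ)) ∩ (affineSpan ℝ K : Set (Fin n → ℝ)) = {p}) ∧
    ∀ m : Fin n → ℝ, m ∈ Submodule.span ℝ ((fun x => x - p) '' (J ∪ K)) → InLambda p m →
      ∃! q : (Fin n → ℝ) × (Fin n → ℝ),
        (q.1 ∈ Submodule.span ℝ ((fun x => x - p) '' J) ∧ InLambda p q.1) ∧
        (q.2 ∈ Submodule.span ℝ ((fun x => x - p) '' K) ∧ InLambda p q.2) ∧ m = q.1 + q.2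



section AuxProp31

variable {n : ℕ} {J : Set (Fin n → ℝ)}

lemma emb_last (a : Fin n → ℝ) : emb a (Fin.last n) = 1 := by simp [emb]

lemma emb_castSucc (a : Fin n → ℝ) (j : Fin n) : emb a (Fin.castSucc j) = a j := by simp [emb]

lemma eLast_last : eLast n (Fin.last n) = 1 := by simp [eLast]

lemma eLast_castSucc (j : Fin n) : eLast n (Fin.castSucc j) = 0 := by
  simp [eLast, Pi.single_eq_of_ne (Fin.castSucc_lt_last j).ne]

lemma zero_mem_cone (hJ0 : (0 : Fin n → ℝ) ∈ J) : (0 : Fin (n+1) → ℝ) ∈ cone J :=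
  ⟨0, 0, hJ0, le_refl 0, by simp⟩

lemma last_nonneg_of_mem_cone {x : Fin (n+1) → ℝ} (hx : x ∈ cone J) :
    0 ≤ x (Fin.last n) := by
  obtain ⟨l, a, haJ, hl, rfl⟩ := hx
  simp [emb_last, hl]

lemma add_smul_eLast_mem (hJconv : Convex ℝ J) (hJ0 : (0 : Fin n → ℝ) ∈ J)
    {x : Fin (n+1) → ℝ} (hx : x ∈ cone J) {t : ℝ} (ht : 0 ≤ t) :
    x + t • eLast n ∈ cone J := by
  obtain ⟨l, a, haJ, hl, rfl⟩ := hx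
  by_cases hlt : l + t = 0
  · have hl0 : l = 0 := by linarith
    have ht0 : t = 0 := by linarith
    subst hl0; subst ht0
    simpa using zero_mem_cone hJ0
  · have hlt' : (0:ℝ) < l + t := lt_of_le_of_ne (by linarith) (Ne.symm hlt)
    refine ⟨l + t, (l/(l+t)) • a, ?_, le_of_lt hlt', ?_⟩
    · have h1 : (0:ℝ) ≤ l/(l+t) := by positivity
      have h2 : (0:ℝ) ≤ t/(l+t) := by positivity
      have h3 : l/(l+t) + t/(l+t) = 1 := by field_simp
      have := hJconv haJ hJ0 h1 h2 h3
      simpa using this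
    · funext i
      refine Fin.lastCases ?_ (fun j => ?_) i
      · simp [emb_last, eLast_last]
      · simp only [Pi.add_apply, Pi.smul_apply, emb_castSucc, eLast_castSucc,
          smul_eq_mul, mul_zero, add_zero]
        field_simp

lemma sub_smul_eLast_mem (hJconv : Convex ℝ J) (hJ0 : (0 : Fin n → ℝ) ∈ J)
    {x : Fin (n+1) → ℝ} {l l' : ℝ} (h : x - l • eLast n ∈ cone J) (hle : l' ≤ l) :
    x - l' • eLast n ∈ cone J := by
  have h2 := add_smul_eLast_mem hJconv hJ0 h (sub_nonneg.mpr hle)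
  have heq : x - l • eLast n + (l - l') • eLast n = x - l' • eLast n := by module
  rwa [heq] at h2

/-- `f_J(x)`: the height of the vertical projection. -/
def fJ (J : Set (Fin n → ℝ)) (x : Fin (n+1) → ℝ) : ℝ :=
  sSup {l : ℝ | x - l • eLast n ∈ cone J}

lemma eps_eq (x : Fin (n+1) → ℝ) : eps J x = x - fJ J x • eLast n := rfl

lemma bddAbove_S (x : Fin (n+1) → ℝ) :
    BddAbove {l : ℝ | x - l • eLast n ∈ cone J} := by
  refine ⟨x (Fin.last n), fun l hl => ?_⟩
  have h := last_nonneg_of_mem_cone hl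
  simp only [Pi.sub_apply, Pi.smul_apply, eLast_last, smul_eq_mul, mul_one] at h
  linarith

lemma nonempty_S {x : Fin (n+1) → ℝ} (hx : x ∈ cone J) :
    Set.Nonempty {l : ℝ | x - l • eLast n ∈ cone J} :=
  ⟨0, by simpa using hx⟩

lemma vert_closed (hJconv : Convex ℝ J) (hJcpt : IsCompact J) (hJ0 : (0 : Fin n → ℝ) ∈ J)
    {x : Fin (n+1) → ℝ} (h : ∀ ε : ℝ, 0 < ε → x + ε • eLast n ∈ cone J) :
    x ∈ cone J := by
  set t := x (Fin.last n) with ht_def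
  set x' : Fin n → ℝ := fun j => x (Fin.castSucc j) with hx'_def
  have ht : 0 ≤ t := by
    by_contra hlt
    push_neg at hlt
    have h1 := last_nonneg_of_mem_cone (h (-t/2) (by linarith))
    simp only [Pi.add_apply, Pi.smul_apply, eLast_last, smul_eq_mul, mul_one] at h1
    rw [← ht_def] at h1
    linarith
  have key : ∀ ε : ℝ, 0 < ε → (t + ε)⁻¹ • x' ∈ J := by
    intro ε hε
    obtain ⟨l, a, haJ, hl0, hx⟩ := h ε hε
    have htε : (0:ℝ) < t + ε := by linarith
    have hl : l = t + ε := by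
      have hc := congrFun hx (Fin.last n)
      simp only [Pi.add_apply, Pi.smul_apply, eLast_last, emb_last, smul_eq_mul,
        mul_one] at hc
      rw [← ht_def] at hc
      linarith
    have hcoord : ∀ j, x' j = (t + ε) * a j := by
      intro j
      have hc := congrFun hx (Fin.castSucc j)
      simp only [Pi.add_apply, Pi.smul_apply, eLast_castSucc, emb_castSucc,
        smul_eq_mul, mul_zero, add_zero] at hc
      rw [hx'_def]
      simpa [hl] using hc
    have heqa : (t + ε)⁻¹ • x' = a := by
      funext j
      simp only [Pi.smul_apply, smul_eq_mul, hcoord j]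
      field_simp
    rwa [heqa]
  rcases eq_or_lt_of_le ht with h0 | hpos
  · obtain ⟨M, hM⟩ := isBounded_iff_forall_norm_le.mp hJcpt.isBounded
    have hMpos : (0:ℝ) ≤ M := le_trans (norm_nonneg _) (hM 0 hJ0)
    have hx0 : ∀ j, x' j = 0 := by
      intro j
      by_contra hne
      have habs : 0 < |x' j| := abs_pos.mpr hne
      set ε : ℝ := |x' j| / (M + 1) with hε_def
      have hεpos : 0 < ε := by positivity
      have hmem := key ε hεpos
      have hn1 : ‖((t + ε)⁻¹ • x') j‖ ≤ M :=
        le_trans (norm_le_pi_norm _ j) (hM _ hmem)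
      rw [Pi.smul_apply, smul_eq_mul] at hn1
      rw [← h0, zero_add] at hn1
      rw [Real.norm_eq_abs, abs_mul, abs_inv, abs_of_pos hεpos] at hn1
      have heq1 : ε⁻¹ * |x' j| = M + 1 := by
        rw [hε_def]
        field_simp
      linarith
    have hxz : x = 0 := by
      funext i
      refine Fin.lastCases ?_ (fun j => ?_) i
      · rw [← ht_def, ← h0]; rfl
      · exact hx0 j
    rw [hxz]
    exact zero_mem_cone hJ0
  · have hb : t⁻¹ • x' ∈ J := by
      have h1 : Filter.Tendsto (fun k : ℕ => t + 1/(k+1 : ℝ)) Filter.atTop (nhds t) := by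
        have h2 : Filter.Tendsto (fun k : ℕ => 1 / ((k : ℝ) + 1)) Filter.atTop (nhds 0) :=
          tendsto_one_div_add_atTop_nhds_zero_nat
        have := h2.const_add t
        simpa using this
      have h2 : Filter.Tendsto (fun k : ℕ => (t + 1/(k+1 : ℝ))⁻¹ • x')
          Filter.atTop (nhds (t⁻¹ • x')) :=
        (h1.inv₀ (ne_of_gt hpos)).smul_const x'
      exact hJcpt.isClosed.mem_of_tendsto h2
        (Filter.Eventually.of_forall fun k => key _ (by positivity))
    refine ⟨t, t⁻¹ • x', hb, le_of_lt hpos, ?_⟩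
    funext i
    refine Fin.lastCases ?_ (fun j => ?_) i
    · simp [emb_last, ← ht_def]
    · have hxj : x (Fin.castSucc j) = x' j := rfl
      simp only [Pi.smul_apply, emb_castSucc, smul_eq_mul, hxj]
      field_simp

lemma fJ_attained (hJconv : Convex ℝ J) (hJcpt : IsCompact J) (hJ0 : (0 : Fin n → ℝ) ∈ J)
    {x : Fin (n+1) → ℝ} (hx : x ∈ cone J) : x - fJ J x • eLast n ∈ cone J := by
  apply vert_closed hJconv hJcpt hJ0
  intro ε hε
  obtain ⟨l, hl, hlt⟩ := exists_lt_of_lt_csSup (nonempty_S hx)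
    (show fJ J x - ε < fJ J x by linarith)
  have h2 := sub_smul_eLast_mem hJconv hJ0 hl (le_of_lt hlt : fJ J x - ε ≤ l)
  have heq : x - (fJ J x - ε) • eLast n = x - fJ J x • eLast n + ε • eLast n := by module
  rwa [heq] at h2

lemma sub_mem_iff (hJconv : Convex ℝ J) (hJcpt : IsCompact J) (hJ0 : (0 : Fin n → ℝ) ∈ J)
    {x : Fin (n+1) → ℝ} (hx : x ∈ cone J) (l : ℝ) :
    x - l • eLast n ∈ cone J ↔ l ≤ fJ J x := by
  constructor
  · intro h; exact le_csSup (bddAbove_S x) h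
  · intro h; exact sub_smul_eLast_mem hJconv hJ0 (fJ_attained hJconv hJcpt hJ0 hx) h

lemma fJ_nonneg {x : Fin (n+1) → ℝ} (hx : x ∈ cone J) : 0 ≤ fJ J x :=
  le_csSup (bddAbove_S x) (by simpa using hx)

lemma fJ_sub (hJconv : Convex ℝ J) (hJcpt : IsCompact J) (hJ0 : (0 : Fin n → ℝ) ∈ J)
    {x : Fin (n+1) → ℝ} (hx : x ∈ cone J) (c : ℝ) :
    fJ J (x - c • eLast n) = fJ J x - c := by
  have hset : {l : ℝ | (x - c • eLast n) - l • eLast n ∈ cone J} = Set.Iic (fJ J x - c) := by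
    ext l
    have heq : (x - c • eLast n) - l • eLast n = x - (c + l) • eLast n := by module
    rw [Set.mem_setOf_eq, heq, sub_mem_iff hJconv hJcpt hJ0 hx (c+l), Set.mem_Iic]
    constructor <;> intro <;> linarith
  rw [fJ, hset, csSup_Iic]

lemma eps_mem (hJconv : Convex ℝ J) (hJcpt : IsCompact J) (hJ0 : (0 : Fin n → ℝ) ∈ J)
    {x : Fin (n+1) → ℝ} (hx : x ∈ cone J) : eps J x ∈ cone J :=
  fJ_attained hJconv hJcpt hJ0 hx

lemma fJ_eps (hJconv : Convex ℝ J) (hJcpt : IsCompact J) (hJ0 : (0 : Fin n → ℝ) ∈ J)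
    {x : Fin (n+1) → ℝ} (hx : x ∈ cone J) : fJ J (eps J x) = 0 := by
  rw [eps_eq, fJ_sub hJconv hJcpt hJ0 hx, sub_self]

lemma mem_lenv_iff (hJconv : Convex ℝ J) (hJcpt : IsCompact J) (hJ0 : (0 : Fin n → ℝ) ∈ J)
    (y : Fin (n+1) → ℝ) : y ∈ lenv J ↔ y ∈ cone J ∧ fJ J y = 0 := by
  constructor
  · rintro ⟨x, hx, rfl⟩
    exact ⟨eps_mem hJconv hJcpt hJ0 hx, fJ_eps hJconv hJcpt hJ0 hx⟩
  · rintro ⟨hy, hf⟩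
    exact ⟨y, hy, by rw [eps_eq, hf, zero_smul, sub_zero]⟩

lemma isLat_eLast : IsLat (eLast n) := by
  intro i
  refine Fin.lastCases ?_ (fun j => ?_) i
  · exact ⟨1, by simp [eLast_last]⟩
  · exact ⟨0, by simp [eLast_castSucc]⟩

lemma isLat_sub_zsmul {x : Fin (n+1) → ℝ} (hx : IsLat x) (z : ℤ) :
    IsLat (x - (z : ℝ) • eLast n) := by
  intro i
  obtain ⟨z1, hz1⟩ := hx i
  obtain ⟨z2, hz2⟩ := isLat_eLast i
  refine ⟨z1 - z * z2, ?_⟩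
  simp only [Pi.sub_apply, Pi.smul_apply, smul_eq_mul, hz1, hz2]
  push_cast
  ring

lemma mem_image_add_iff {C : Set (Fin (n+1) → ℝ)} {y : Fin (n+1) → ℝ} :
    y ∈ (fun x => x + eLast n) '' C ↔ y - eLast n ∈ C := by
  constructor
  · rintro ⟨x, hx, rfl⟩; simpa using hx
  · intro h; exact ⟨y - eLast n, h, by simp⟩

end AuxProp31

/-- Proposition 3.1, (a) ↔ (b). -/
theorem llenv_eq_iff_rind {n : ℕ} (hn : 1 ≤ n) (J : Set (Fin n → ℝ))
    (hJconv : Convex ℝ J) (hJcpt : IsCompact J) (hJ0 : (0 : Fin n → ℝ) ∈ J) :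
    llenv J = latt (lenv J) ↔
      latt (lenv J) = latt (cone J) \ latt ((fun x => x + eLast n) '' cone J) := by
  constructor
  · intro ha
    ext y
    simp only [Set.mem_diff]
    constructor
    · rintro ⟨hylenv, hylat⟩
      have hy := (mem_lenv_iff hJconv hJcpt hJ0 y).mp hylenv
      refine ⟨⟨hy.1, hylat⟩, ?_⟩
      rintro ⟨hyC1, -⟩
      have hsub : y - eLast n ∈ cone J := mem_image_add_iff.mp hyC1
      have h1 : (1:ℝ) ≤ fJ J y :=
        (sub_mem_iff hJconv hJcpt hJ0 hy.1 1).mp (by simpa using hsub)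
      rw [hy.2] at h1
      linarith
    · rintro ⟨⟨hyC, hylat⟩, hnot⟩
      have hflt : fJ J y < 1 := by
        by_contra hge
        push_neg at hge
        refine hnot ⟨mem_image_add_iff.mpr ?_, hylat⟩
        have := (sub_mem_iff hJconv hJcpt hJ0 hyC 1).mpr hge
        simpa using this
      have hf0 : 0 ≤ fJ J y := fJ_nonneg hyC
      have hepsl : eps J y ∈ llenv J := ⟨y, ⟨hyC, hylat⟩, rfl⟩
      rw [ha] at hepsl
      have hepslat : IsLat (eps J y) := hepsl.2
      obtain ⟨z1, hz1⟩ := hylat (Fin.last n)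
      obtain ⟨z2, hz2⟩ := hepslat (Fin.last n)
      have hlast : eps J y (Fin.last n) = y (Fin.last n) - fJ J y := by
        rw [eps_eq]
        simp [eLast_last]
      have heq : fJ J y = ((z1 - z2 : ℤ) : ℝ) := by
        rw [hz1, hz2] at hlast
        push_cast
        linarith
      have hz : (z1 - z2 : ℤ) = 0 := by
        have h0le : (0:ℝ) ≤ ((z1-z2:ℤ):ℝ) := heq ▸ hf0
        have hlt1 : ((z1-z2:ℤ):ℝ) < 1 := heq ▸ hflt
        have h0le' : (0:ℤ) ≤ z1 - z2 := by exact_mod_cast h0le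
        have hlt1' : (z1 - z2 : ℤ) < 1 := by exact_mod_cast hlt1
        omega
      have hfy : fJ J y = 0 := by rw [heq, hz]; simp
      exact ⟨(mem_lenv_iff hJconv hJcpt hJ0 y).mpr ⟨hyC, hfy⟩, hylat⟩
  · intro hb
    ext y
    constructor
    · rintro ⟨x, ⟨hxC, hxlat⟩, rfl⟩
      have ht0 : 0 ≤ fJ J x := fJ_nonneg hxC
      set z : ℤ := ⌊fJ J x⌋ with hzdef
      have hzle : (z:ℝ) ≤ fJ J x := Int.floor_le _
      have hltz : fJ J x < z + 1 := Int.lt_floor_add_one _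
      set w := x - (z:ℝ) • eLast n with hwdef
      have hwC : w ∈ cone J := (sub_mem_iff hJconv hJcpt hJ0 hxC z).mpr hzle
      have hwlat : IsLat w := isLat_sub_zsmul hxlat z
      have hfw : fJ J w = fJ J x - z := by
        rw [hwdef, fJ_sub hJconv hJcpt hJ0 hxC]
      have hwnot : w ∉ latt ((fun x => x + eLast n) '' cone J) := by
        rintro ⟨hw1, -⟩
        have h1 : (1:ℝ) ≤ fJ J w :=
          (sub_mem_iff hJconv hJcpt hJ0 hwC 1).mp
            (by simpa using mem_image_add_iff.mp hw1)
        rw [hfw] at h1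
        linarith
      have hwlenv : w ∈ latt (lenv J) := by
        rw [hb]
        exact ⟨⟨hwC, hwlat⟩, hwnot⟩
      have hfw0 : fJ J w = 0 := ((mem_lenv_iff hJconv hJcpt hJ0 w).mp hwlenv.1).2
      have htz : fJ J x = (z:ℝ) := by rw [hfw] at hfw0; linarith
      have hepsw : eps J x = w := by rw [eps_eq, htz, hwdef]
      rw [hepsw]
      exact hwlenv
    · rintro ⟨hylenv, hylat⟩
      have hy := (mem_lenv_iff hJconv hJcpt hJ0 y).mp hylenv
      refine ⟨y, ⟨hy.1, hylat⟩, ?_⟩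
      rw [eps_eq, hy.2, zero_smul, sub_zero]

end ArxivFreeSum
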